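/- Let k ≥ 1, let λ₁,…,λ_k be nonnegative integers with λ₁ > 0 and λ_k > 0, and let p(x) = x^k − Σ_{i=1}^k λ_i x^{k-i}. Then p has a unique positive real root κ (counted with multiplicity), and every other complex root of p has modulus strictly less than κ. -/

import Mathlib

open Finset Polynomial

private noncomputable def fCO (k : ℕ) (lam : ℕ → ℕ) (x : ℝ) : ℝ :=
  ∑ i ∈ Finset.Icc 1 k, (lam i : ℝ) * (x⁻¹) ^ i

private lemma fCO_mul (k : ℕ) (lam : ℕ → ℕ) {x : ℝ} (hx : 0 < x) :
    x ^ k * fCO k lam x = ∑ i ∈ Finset.Icc 1 k, (lam i : ℝ) * x ^ (k - i) := by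
  rw [fCO, Finset.mul_sum]
  refine Finset.sum_congr rfl fun i hi => ?_
  obtain ⟨h1i, hik⟩ := Finset.mem_Icc.mp hi
  have hpow : x ^ k = x ^ (k - i) * x ^ i := by
    rw [← pow_add]; congr 1; omega
  rw [hpow, inv_pow]
  have hxi : (x : ℝ) ^ i ≠ 0 := pow_ne_zero _ (ne_of_gt hx)
  field_simp

private lemma fCO_anti (k : ℕ) (lam : ℕ → ℕ) (hk : 1 ≤ k) (h1 : 1 ≤ lam 1) :
    StrictAntiOn (fCO k lam) (Set.Ioi 0) := by
  intro x hx y hy hxy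
  simp only [Set.mem_Ioi] at hx hy
  apply Finset.sum_lt_sum
  · intro i hi
    have hinv : y⁻¹ ≤ x⁻¹ := inv_anti₀ hx (le_of_lt hxy)
    have h0 : (0:ℝ) ≤ y⁻¹ := inv_nonneg.mpr (le_of_lt hy)
    exact mul_le_mul_of_nonneg_left (pow_le_pow_left₀ h0 hinv i) (by positivity)
  · refine ⟨1, Finset.mem_Icc.mpr ⟨le_rfl, hk⟩, ?_⟩
    have hlam : (0 : ℝ) < lam 1 := by exact_mod_cast h1
    have : y⁻¹ < x⁻¹ := by
      apply inv_strictAnti₀ hx hxy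
    simpa using mul_lt_mul_of_pos_left this hlam

private lemma fCO_exists (k : ℕ) (lam : ℕ → ℕ) (hk : 1 ≤ k) (h1 : 1 ≤ lam 1) :
    ∃ κ : ℝ, 1 ≤ κ ∧ fCO k lam κ = 1 := by
  set L : ℝ := ∑ i ∈ Finset.Icc 1 k, (lam i : ℝ) with hLdef
  have hL1 : (1 : ℝ) ≤ L := by
    calc (1 : ℝ) ≤ (lam 1 : ℝ) := by exact_mod_cast h1
    _ ≤ L := Finset.single_le_sum (f := fun i => (lam i : ℝ))
        (fun i _ => by positivity) (Finset.mem_Icc.mpr ⟨le_rfl, hk⟩)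
  have hb : (1 : ℝ) ≤ L + 1 := by linarith
  have hbpos : (0 : ℝ) < L + 1 := by linarith
  have hcont : ContinuousOn (fCO k lam) (Set.Icc 1 (L + 1)) := by
    apply continuousOn_finset_sum
    intro i _
    apply ContinuousOn.mul continuousOn_const
    apply ContinuousOn.pow
    apply ContinuousOn.inv₀ continuousOn_id
    intro x hx
    have : (1 : ℝ) ≤ x := hx.1
    simpa using by linarith
  have hf1 : (1 : ℝ) ≤ fCO k lam 1 := by
    have : fCO k lam 1 = L := by
      simp [fCO, hLdef]
    linarith [this]
  have hfb : fCO k lam (L + 1) ≤ 1 := by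
    have hterm : ∀ i ∈ Finset.Icc 1 k,
        (lam i : ℝ) * ((L + 1)⁻¹) ^ i ≤ (lam i : ℝ) * (L + 1)⁻¹ := by
      intro i hi
      obtain ⟨h1i, _⟩ := Finset.mem_Icc.mp hi
      have hinv0 : (0 : ℝ) ≤ (L + 1)⁻¹ := by positivity
      have hinv1 : (L + 1)⁻¹ ≤ 1 := by
        rw [inv_le_one_iff₀]; right; linarith
      calc (lam i : ℝ) * ((L + 1)⁻¹) ^ i ≤ (lam i : ℝ) * ((L + 1)⁻¹) ^ 1 :=
            mul_le_mul_of_nonneg_left (pow_le_pow_of_le_one hinv0 hinv1 h1i) (by positivity)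
      _ = (lam i : ℝ) * (L + 1)⁻¹ := by rw [pow_one]
    calc fCO k lam (L + 1) ≤ ∑ i ∈ Finset.Icc 1 k, (lam i : ℝ) * (L + 1)⁻¹ :=
          Finset.sum_le_sum hterm
    _ = L * (L + 1)⁻¹ := by rw [← Finset.sum_mul]
    _ ≤ 1 := by
        rw [mul_inv_le_iff₀ hbpos]; linarith
  have := intermediate_value_Icc' hb hcont
  have h1mem : (1 : ℝ) ∈ Set.Icc (fCO k lam (L + 1)) (fCO k lam 1) := ⟨hfb, hf1⟩
  obtain ⟨κ, hκmem, hκ⟩ := this h1mem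
  exact ⟨κ, hκmem.1, hκ⟩

theorem stmt6 (k : ℕ) (lam : ℕ → ℕ) (hk : 1 ≤ k)
    (h1 : 1 ≤ lam 1) (hkpos : 1 ≤ lam k) :
    ∃ κ : ℝ, 0 < κ ∧
      κ ^ k = ∑ i ∈ Finset.Icc 1 k, (lam i : ℝ) * κ ^ (k - i) ∧
      (∀ x : ℝ, 0 < x → x ^ k = ∑ i ∈ Finset.Icc 1 k, (lam i : ℝ) * x ^ (k - i) → x = κ) ∧
      Polynomial.rootMultiplicity κ
        (Polynomial.X ^ k -
          ∑ i ∈ Finset.Icc 1 k, Polynomial.C (lam i : ℝ) * Polynomial.X ^ (k - i)) = 1 ∧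
      ∀ z : ℂ, z ^ k = ∑ i ∈ Finset.Icc 1 k, (lam i : ℂ) * z ^ (k - i) →
        z ≠ (κ : ℂ) → ‖z‖ < κ := by
  obtain ⟨κ, hκ1, hκf⟩ := fCO_exists k lam hk h1
  have hκpos : (0 : ℝ) < κ := lt_of_lt_of_le one_pos hκ1
  have hanti := fCO_anti k lam hk h1
  -- the root equation
  have hroot : κ ^ k = ∑ i ∈ Finset.Icc 1 k, (lam i : ℝ) * κ ^ (k - i) := by
    have := fCO_mul k lam hκpos
    rw [hκf, mul_one] at this
    exact this
  -- uniqueness among positive reals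
  have huniq : ∀ x : ℝ, 0 < x →
      x ^ k = ∑ i ∈ Finset.Icc 1 k, (lam i : ℝ) * x ^ (k - i) → x = κ := by
    intro x hx hxeq
    have hfx : fCO k lam x = 1 := by
      have hm := fCO_mul k lam hx
      rw [← hxeq] at hm
      have hxk : (0:ℝ) < x ^ k := pow_pos hx k
      exact mul_left_cancel₀ (ne_of_gt hxk) (hm.trans (mul_one (x ^ k)).symm)
    exact hanti.injOn (Set.mem_Ioi.mpr hx) (Set.mem_Ioi.mpr hκpos) (hfx.trans hκf.symm)
  refine ⟨κ, hκpos, hroot, huniq, ?_, ?_⟩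
  · -- root multiplicity 1
    set P : Polynomial ℝ := Polynomial.X ^ k -
      ∑ i ∈ Finset.Icc 1 k, Polynomial.C (lam i : ℝ) * Polynomial.X ^ (k - i) with hP
    have hPeval : ∀ x : ℝ, P.eval x = x ^ k - ∑ i ∈ Finset.Icc 1 k, (lam i : ℝ) * x ^ (k - i) := by
      intro x
      simp [hP, Polynomial.eval_finset_sum]
    have hProot : P.IsRoot κ := by
      rw [Polynomial.IsRoot, hPeval, hroot, sub_self]
    have hP0 : P ≠ 0 := by
      intro h
      have := hPeval 0
      rw [h] at this
      simp only [Polynomial.eval_zero] at this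
      have hsum : ∑ i ∈ Finset.Icc 1 k, (lam i : ℝ) * (0:ℝ) ^ (k - i) = (lam k : ℝ) := by
        rw [Finset.sum_eq_single k]
        · simp
        · intro i hi hik
          obtain ⟨_, h2⟩ := Finset.mem_Icc.mp hi
          have : k - i ≠ 0 := by omega
          simp [zero_pow this]
        · intro h; exact absurd (Finset.mem_Icc.mpr ⟨hk, le_rfl⟩) h
      rw [hsum, zero_pow (by omega : k ≠ 0)] at this
      have : (lam k : ℝ) = 0 := by linarith
      have : lam k = 0 := by exact_mod_cast this
      omega
    -- derivative evaluation
    have hderiv : (Polynomial.derivative P).eval κ =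
        (k : ℝ) * κ ^ (k - 1) - ∑ i ∈ Finset.Icc 1 k, (lam i : ℝ) * ((k - i : ℕ) * κ ^ (k - i - 1)) := by
      simp [hP, Polynomial.derivative_sum, Polynomial.eval_finset_sum, mul_assoc, Polynomial.derivative_X_pow]
    have hderivpos : 0 < (Polynomial.derivative P).eval κ := by
      have key : κ * (Polynomial.derivative P).eval κ =
          ∑ i ∈ Finset.Icc 1 k, (lam i : ℝ) * (i : ℝ) * κ ^ (k - i) := by
        rw [hderiv, mul_sub]
        have e1 : κ * ((k : ℝ) * κ ^ (k - 1)) = (k : ℝ) * κ ^ k := by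
          have : κ ^ (k - 1) * κ = κ ^ k := by
            rw [← pow_succ]; congr 1; omega
          rw [← this]; ring
        have e2 : κ * ∑ i ∈ Finset.Icc 1 k, (lam i : ℝ) * ((k - i : ℕ) * κ ^ (k - i - 1)) =
            ∑ i ∈ Finset.Icc 1 k, (lam i : ℝ) * ((k - i : ℕ) * κ ^ (k - i)) := by
          rw [Finset.mul_sum]
          refine Finset.sum_congr rfl fun i hi => ?_
          obtain ⟨h1i, hik⟩ := Finset.mem_Icc.mp hi
          rcases eq_or_lt_of_le hik with h | h
          · subst h; simp
          · have : κ ^ (k - i - 1) * κ = κ ^ (k - i) := by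
              rw [← pow_succ]; congr 1; omega
            rw [← this]; ring
        rw [e1, e2]
        have e3 : (k : ℝ) * κ ^ k = ∑ i ∈ Finset.Icc 1 k, (lam i : ℝ) * ((k : ℝ) * κ ^ (k - i)) := by
          rw [hroot, Finset.mul_sum]
          refine Finset.sum_congr rfl fun i _ => by ring
        rw [e3, ← Finset.sum_sub_distrib]
        refine Finset.sum_congr rfl fun i hi => ?_
        obtain ⟨h1i, hik⟩ := Finset.mem_Icc.mp hi
        have hcast : ((k - i : ℕ) : ℝ) = (k : ℝ) - (i : ℝ) := by
          rw [Nat.cast_sub hik]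
        rw [hcast]; ring
      have hsum_pos : 0 < ∑ i ∈ Finset.Icc 1 k, (lam i : ℝ) * (i : ℝ) * κ ^ (k - i) := by
        have hterm : (0:ℝ) < (lam 1 : ℝ) * (1 : ℝ) * κ ^ (k - 1) := by
          have : (0:ℝ) < (lam 1 : ℝ) := by exact_mod_cast h1
          positivity
        calc (0:ℝ) < (lam 1 : ℝ) * ((1:ℕ) : ℝ) * κ ^ (k - 1) := by simpa using hterm
        _ ≤ ∑ i ∈ Finset.Icc 1 k, (lam i : ℝ) * (i : ℝ) * κ ^ (k - i) :=
            Finset.single_le_sum (f := fun i => (lam i : ℝ) * (i : ℝ) * κ ^ (k - i))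
              (fun i _ => by positivity) (Finset.mem_Icc.mpr ⟨le_rfl, hk⟩)
      nlinarith [key, hsum_pos, hκpos]
    have hnotrootd : ¬ (Polynomial.derivative P).IsRoot κ := by
      intro h
      rw [Polynomial.IsRoot] at h
      linarith [hderivpos, h]
    have hm1 : 1 ≤ P.rootMultiplicity κ := (Polynomial.rootMultiplicity_pos hP0).mpr hProot
    have hm2 : P.rootMultiplicity κ ≤ 1 := by
      by_contra h
      push_neg at h
      have h2 : 2 ≤ P.rootMultiplicity κ := h
      have hd := Polynomial.derivative_rootMultiplicity_of_root hProot
      have hdpos : 0 < (Polynomial.derivative P).rootMultiplicity κ := by omega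
      have hd0 : Polynomial.derivative P ≠ 0 := by
        intro hz
        rw [hz, Polynomial.rootMultiplicity_zero] at hdpos
        exact absurd hdpos (lt_irrefl 0)
      exact hnotrootd ((Polynomial.rootMultiplicity_pos hd0).mp hdpos)
    omega
  · -- complex roots
    intro z hz hzκ
    have hz0 : z ≠ 0 := by
      intro h
      subst h
      rw [zero_pow (by omega : k ≠ 0)] at hz
      have hsum : ∑ i ∈ Finset.Icc 1 k, (lam i : ℂ) * (0:ℂ) ^ (k - i) = (lam k : ℂ) := by
        rw [Finset.sum_eq_single k]
        · simp
        · intro i hi hik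
          obtain ⟨_, h2⟩ := Finset.mem_Icc.mp hi
          have : k - i ≠ 0 := by omega
          simp [zero_pow this]
        · intro h; exact absurd (Finset.mem_Icc.mpr ⟨hk, le_rfl⟩) h
      rw [hsum] at hz
      have : (lam k : ℂ) = 0 := hz.symm
      have : lam k = 0 := by exact_mod_cast this
      omega
    set r : ℝ := ‖z‖ with hrdef
    have hr0 : 0 < r := by
      rw [hrdef]
      exact norm_pos_iff.mpr hz0
    have habs_term : ∀ i, ‖(lam i : ℂ) * z ^ (k - i)‖ = (lam i : ℝ) * r ^ (k - i) := by
      intro i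
      rw [norm_mul, norm_pow]
      congr 1
      exact Complex.norm_natCast _
    have hle : r ^ k ≤ ∑ i ∈ Finset.Icc 1 k, (lam i : ℝ) * r ^ (k - i) := by
      calc r ^ k = ‖z ^ k‖ := by rw [norm_pow]
      _ = ‖∑ i ∈ Finset.Icc 1 k, (lam i : ℂ) * z ^ (k - i)‖ := by rw [hz]
      _ ≤ ∑ i ∈ Finset.Icc 1 k, ‖(lam i : ℂ) * z ^ (k - i)‖ :=
          norm_sum_le _ _
      _ = ∑ i ∈ Finset.Icc 1 k, (lam i : ℝ) * r ^ (k - i) :=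
          Finset.sum_congr rfl fun i _ => habs_term i
    have hrκ : r ≤ κ := by
      by_contra h
      push_neg at h
      have hf : fCO k lam r < fCO k lam κ := hanti (Set.mem_Ioi.mpr hκpos) (Set.mem_Ioi.mpr hr0) h
      rw [hκf] at hf
      have hmul := fCO_mul k lam hr0
      have : ∑ i ∈ Finset.Icc 1 k, (lam i : ℝ) * r ^ (k - i) < r ^ k := by
        rw [← hmul]
        have hrk : (0:ℝ) < r ^ k := pow_pos hr0 k
        nlinarith
      linarith
    rcases lt_or_eq_of_le hrκ with h | h
    · exact h
    · -- r = κ : derive contradiction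
      exfalso
      have h1mem : (1 : ℕ) ∈ Finset.Icc 1 k := Finset.mem_Icc.mpr ⟨le_rfl, hk⟩
      have hsplit : z ^ k = (lam 1 : ℂ) * z ^ (k - 1) +
          ∑ i ∈ (Finset.Icc 1 k).erase 1, (lam i : ℂ) * z ^ (k - i) := by
        rw [hz]
        exact (Finset.add_sum_erase _ (fun i => (lam i : ℂ) * z ^ (k - i)) h1mem).symm
      have hκsplit : κ ^ k = (lam 1 : ℝ) * κ ^ (k - 1) +
          ∑ i ∈ (Finset.Icc 1 k).erase 1, (lam i : ℝ) * κ ^ (k - i) := by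
        rw [hroot]
        exact (Finset.add_sum_erase _ (fun i => (lam i : ℝ) * κ ^ (k - i)) h1mem).symm
      set a : ℂ := (lam 1 : ℂ) * z ^ (k - 1) with hadef
      set R : ℂ := ∑ i ∈ (Finset.Icc 1 k).erase 1, (lam i : ℂ) * z ^ (k - i) with hRdef
      have habs_a : ‖a‖ = (lam 1 : ℝ) * κ ^ (k - 1) := by
        rw [hadef, habs_term 1, h]
      have habs_R : ‖R‖ ≤ ∑ i ∈ (Finset.Icc 1 k).erase 1, (lam i : ℝ) * κ ^ (k - i) := by
        calc ‖R‖ ≤ ∑ i ∈ (Finset.Icc 1 k).erase 1, ‖(lam i : ℂ) * z ^ (k - i)‖ :=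
            norm_sum_le _ _
        _ = ∑ i ∈ (Finset.Icc 1 k).erase 1, (lam i : ℝ) * κ ^ (k - i) := by
            refine Finset.sum_congr rfl fun i _ => ?_
            rw [habs_term i, h]
      have habssum : ‖a + R‖ = ‖a‖ + ‖R‖ := by
        have e1 : ‖a + R‖ = κ ^ k := by
          rw [← hsplit, norm_pow, ← hrdef, h]
        have e2 : ‖a‖ + ‖R‖ ≤ κ ^ k := by
          rw [habs_a, hκsplit]
          linarith [habs_R]
        have e3 : ‖a + R‖ ≤ ‖a‖ + ‖R‖ := norm_add_le a R
        linarith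
      have hray : SameRay ℝ a R := by
        rw [sameRay_iff_norm_add]
        simpa using habssum
      have ha0 : a ≠ 0 := by
        rw [hadef]
        apply mul_ne_zero
        · exact_mod_cast Nat.one_le_iff_ne_zero.mp h1
        · exact pow_ne_zero _ hz0
      have hray2 : SameRay ℝ a (z ^ k) := by
        rw [hsplit]
        exact (SameRay.refl a).add_right hray
      obtain ⟨t, ht0, hts⟩ := hray2.exists_nonneg_left ha0
      -- z ^ k = t • a
      have hzk : z ^ k = z * z ^ (k - 1) := by
        rw [← pow_succ']; congr 1; omega
      have hts' : z * z ^ (k - 1) = ((t * lam 1 : ℝ) : ℂ) * z ^ (k - 1) := by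
        rw [← hzk, ← hts, hadef, Complex.real_smul]
        push_cast
        ring
      have hz1 : z = ((t * lam 1 : ℝ) : ℂ) := by
        have := mul_right_cancel₀ (pow_ne_zero (k - 1) hz0) hts'
        exact this
      have habsz : r = t * lam 1 := by
        rw [hrdef, hz1, Complex.norm_real, Real.norm_eq_abs, abs_of_nonneg]
        positivity
      have : z = (κ : ℂ) := by
        rw [hz1, ← habsz, h]
      exact hzκ this
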